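/- Let $X \in \mathbb{R}^{n \times p}$ with $n \geq p$ have full column rank, $\Sigma = X^T X$, and let $s \in \mathbb{R}^p$ with $\mathrm{diag}(s) \preceq 2\Sigma$. Then a matrix $\tilde{X} \in \mathbb{R}^{n \times p}$ satisfies $\tilde{X}^T \tilde{X} = \Sigma$ and $X^T \tilde{X} = \Sigma - \mathrm{diag}(s)$ if and only if $\tilde{X} = X(I - \Sigma^{-1}\mathrm{diag}(s)) + UC$, where $U \in \mathbb{R}^{n \times (n-p)}$ is an orthonormal matrix with $U^T X = 0$ and $C \in \mathbb{R}^{(n-p) \times p}$ satisfies $C^T C = 2\,\mathrm{diag}(s) - \mathrm{diag}(s)\Sigma^{-1}\mathrm{diag}(s)$. -/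

import Mathlib

open Matrix Module Submodule

lemma knockoff_aux_U (n p : ℕ) (hnp : p ≤ n)
    (X : Matrix (Fin n) (Fin p) ℝ) (hrank : X.rank = p) :
    ∃ U : Matrix (Fin n) (Fin (n - p)) ℝ, Uᵀ * U = 1 ∧ Uᵀ * X = 0 ∧
      ∀ R : Matrix (Fin n) (Fin p) ℝ, Xᵀ * R = 0 → U * (Uᵀ * R) = R := by
  classical
  let e : EuclideanSpace ℝ (Fin n) ≃ₗ[ℝ] (Fin n → ℝ) := WithLp.linearEquiv 2 ℝ (Fin n → ℝ)
  have hinner : ∀ x y : EuclideanSpace ℝ (Fin n), (inner ℝ x y : ℝ) = ∑ i, x i * y i := by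
    intro x y
    simp [PiLp.inner_apply, RCLike.inner_apply, mul_comm]
  let W : Submodule ℝ (EuclideanSpace ℝ (Fin n)) :=
    Submodule.map (e.symm : (Fin n → ℝ) →ₗ[ℝ] EuclideanSpace ℝ (Fin n)) (Submodule.span ℝ (Set.range Xᵀ))
  have hWrank : finrank ℝ W = p := by
    rw [LinearEquiv.finrank_map_eq]
    exact (Matrix.rank_eq_finrank_span_cols X).symm.trans hrank
  have hVrank : finrank ℝ Wᗮ = n - p := by
    have h1 := W.finrank_add_finrank_orthogonal
    have h2 : finrank ℝ (EuclideanSpace ℝ (Fin n)) = n := finrank_euclideanSpace_fin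
    omega
  let b : OrthonormalBasis (Fin (n - p)) ℝ Wᗮ :=
    (stdOrthonormalBasis ℝ Wᗮ).reindex (finCongr hVrank)
  let f : Fin (n - p) → EuclideanSpace ℝ (Fin n) := fun j => (b j : EuclideanSpace ℝ (Fin n))
  let U : Matrix (Fin n) (Fin (n - p)) ℝ := Matrix.of fun i j => f j i
  have hcol : ∀ j : Fin p, (e.symm (Xᵀ j) : EuclideanSpace ℝ (Fin n)) ∈ W := by
    intro j
    exact Submodule.mem_map_of_mem (Submodule.subset_span ⟨j, rfl⟩)
  have hcolval : ∀ (v : Fin n → ℝ) (i : Fin n), (e.symm v : EuclideanSpace ℝ (Fin n)) i = v i := fun _ _ => rfl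
  have hUU : Uᵀ * U = 1 := by
    ext j k
    have := (orthonormal_iff_ite.mp b.orthonormal) j k
    rw [Matrix.mul_apply, Matrix.one_apply]
    simp only [Matrix.transpose_apply, U, Matrix.of_apply]
    rw [show ∑ i, f j i * f k i = (inner ℝ (f j) (f k) : ℝ) from (hinner _ _).symm]
    rw [show (inner ℝ (f j) (f k) : ℝ) = (inner ℝ (b j) (b k) : ℝ) from rfl, this]
  have hUX : Uᵀ * X = 0 := by
    ext j k
    rw [Matrix.mul_apply, Matrix.zero_apply]
    simp only [Matrix.transpose_apply, U, Matrix.of_apply]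
    have : ∑ i, f j i * X i k = (inner ℝ (f j) (e.symm (Xᵀ k)) : ℝ) := by
      rw [hinner]; rfl
    rw [this]
    exact Submodule.inner_left_of_mem_orthogonal (hcol k) (b j).2
  refine ⟨U, hUU, hUX, ?_⟩
  intro R hR
  ext i k
  set v : EuclideanSpace ℝ (Fin n) := e.symm (fun i => R i k) with hv
  have hvmem : v ∈ Wᗮ := by
    rw [Submodule.mem_orthogonal]
    intro u hu
    obtain ⟨u', hu', rfl⟩ := hu
    induction hu' using Submodule.span_induction with
    | mem x hx =>
        obtain ⟨j, rfl⟩ := hx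
        rw [hinner]
        have h0 := congrFun (congrFun hR j) k
        rw [Matrix.mul_apply, Matrix.zero_apply] at h0
        exact h0
    | zero => simp
    | add x y hx hy ihx ihy => rw [map_add, inner_add_left, ihx, ihy, add_zero]
    | smul a x hx ih => rw [_root_.map_smul, inner_smul_left, ih, mul_zero]
  have hrepr : ∀ i', v i' = ∑ j, (inner ℝ (f j) v : ℝ) * f j i' := by
    have hsum := b.sum_repr ⟨v, hvmem⟩
    intro i'
    have := congrArg (fun w : Wᗮ => (w : EuclideanSpace ℝ (Fin n)) i') hsum
    simp only [AddSubmonoidClass.coe_finset_sum, SetLike.val_smul] at this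
    rw [← this]
    rw [WithLp.ofLp_sum, Finset.sum_apply]
    congr 1
    ext j
    rw [PiLp.smul_apply, smul_eq_mul]
    congr 1
    rw [b.repr_apply_apply]
    rfl
  rw [Matrix.mul_apply]
  have hcoord : ∀ j, (Uᵀ * R) j k = (inner ℝ (f j) v : ℝ) := by
    intro j
    rw [Matrix.mul_apply, hinner]
    rfl
  calc ∑ j, U i j * (Uᵀ * R) j k = ∑ j, (inner ℝ (f j) v : ℝ) * f j i := by
        refine Finset.sum_congr rfl fun j _ => ?_
        rw [hcoord j, mul_comm]; rfl
    _ = v i := (hrepr i).symm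
    _ = R i k := rfl

lemma knockoff_sigma_isUnit (n p : ℕ) (X : Matrix (Fin n) (Fin p) ℝ) (hrank : X.rank = p) :
    IsUnit (Xᵀ * X).det := by
  classical
  have hker : LinearMap.ker X.mulVecLin = ⊥ := by
    have h1 := LinearMap.finrank_range_add_finrank_ker X.mulVecLin
    have h2 : finrank ℝ (Fin p → ℝ) = p := by simp
    have h3 : finrank ℝ (LinearMap.range X.mulVecLin) = p := hrank
    have : finrank ℝ (LinearMap.ker X.mulVecLin) = 0 := by omega
    exact Submodule.finrank_eq_zero.mp this
  have hinj : Function.Injective X.mulVecLin := LinearMap.ker_eq_bot.mp hker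
  have hpd : (Xᵀ * X).PosDef := by
    refine Matrix.posDef_iff_dotProduct_mulVec.mpr ⟨Matrix.isHermitian_conjTranspose_mul_self X, fun x hx => ?_⟩
    have hxv : X *ᵥ x ≠ 0 := by
      intro h
      apply hx
      apply hinj
      simpa [Matrix.mulVecLin_apply] using h
    have : star x ⬝ᵥ (Xᵀ * X) *ᵥ x = (X *ᵥ x) ⬝ᵥ (X *ᵥ x) := by
      rw [star_trivial, ← Matrix.mulVec_mulVec, Matrix.dotProduct_mulVec, Matrix.vecMul_transpose]
    rw [this]
    rcases lt_or_eq_of_le (Finset.sum_nonneg fun i _ => mul_self_nonneg ((X *ᵥ x) i)) with h | h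
    · exact h
    · exact absurd (dotProduct_self_eq_zero.mp h.symm) hxv
  exact hpd.isUnit.map (Matrix.detMonoidHom)

theorem knockoff_construction_iff (n p : ℕ) (hnp : p ≤ n)
    (X : Matrix (Fin n) (Fin p) ℝ) (hrank : X.rank = p)
    (s : Fin p → ℝ)
    (hs : ((2 : ℝ) • (Xᵀ * X) - Matrix.diagonal s).PosSemidef)
    (Xt : Matrix (Fin n) (Fin p) ℝ) :
    (Xtᵀ * Xt = Xᵀ * X ∧ Xᵀ * Xt = Xᵀ * X - Matrix.diagonal s) ↔
      (∃ (U : Matrix (Fin n) (Fin (n - p)) ℝ) (C : Matrix (Fin (n - p)) (Fin p) ℝ),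
        Uᵀ * U = 1 ∧ Uᵀ * X = 0 ∧
        Cᵀ * C = (2 : ℝ) • Matrix.diagonal s
            - Matrix.diagonal s * (Xᵀ * X)⁻¹ * Matrix.diagonal s ∧
        Xt = X * (1 - (Xᵀ * X)⁻¹ * Matrix.diagonal s) + U * C) := by
  classical
  have hdet := knockoff_sigma_isUnit n p X hrank
  set D := Matrix.diagonal s with hD
  set S := (Xᵀ * X)⁻¹ with hS
  have h1 : (Xᵀ * X) * S = 1 := Matrix.mul_nonsing_inv _ hdet
  have h2 : S * (Xᵀ * X) = 1 := Matrix.nonsing_inv_mul _ hdet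
  have hGT : (Xᵀ * X)ᵀ = Xᵀ * X := by rw [Matrix.transpose_mul, Matrix.transpose_transpose]
  have hST : Sᵀ = S := by rw [hS, Matrix.transpose_nonsing_inv, hGT]
  have hDT : Dᵀ = D := Matrix.diagonal_transpose s
  have hA : Xᵀ * (X * (1 - S * D)) = Xᵀ * X - D := by
    rw [← Matrix.mul_assoc, Matrix.mul_sub, Matrix.mul_one, ← Matrix.mul_assoc, h1,
      Matrix.one_mul]
  have hKsub : (Xᵀ * X - D) * (1 - S * D) = Xᵀ * X - ((2 : ℝ) • D - D * S * D) := by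
    rw [Matrix.sub_mul, Matrix.mul_sub, Matrix.mul_sub, Matrix.mul_one, Matrix.mul_one,
      ← Matrix.mul_assoc, h1, Matrix.one_mul, two_smul]
    simp only [Matrix.mul_assoc]
    abel
  have hKsub' : (1 - D * S) * (Xᵀ * X - D) = Xᵀ * X - ((2 : ℝ) • D - D * S * D) := by
    rw [Matrix.sub_mul, Matrix.mul_sub, Matrix.mul_sub, Matrix.one_mul, Matrix.one_mul,
      Matrix.mul_assoc D S (Xᵀ * X), h2, Matrix.mul_one, two_smul]
    simp only [Matrix.mul_assoc]
    abel
  have hTr : ∀ C : Matrix (Fin (n - p)) (Fin p) ℝ, ∀ U : Matrix (Fin n) (Fin (n - p)) ℝ,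
      (X * (1 - S * D) + U * C)ᵀ = (1 - D * S) * Xᵀ + Cᵀ * Uᵀ := by
    intro C U
    rw [Matrix.transpose_add, Matrix.transpose_mul, Matrix.transpose_mul, Matrix.transpose_sub,
      Matrix.transpose_one, Matrix.transpose_mul, hST, hDT]
  constructor
  · rintro ⟨hGram, hCross⟩
    obtain ⟨U0, hU0U, hU0X, hU0proj⟩ := knockoff_aux_U n p hnp X hrank
    set R := Xt - X * (1 - S * D) with hR
    have hXR : Xᵀ * R = 0 := by rw [hR, Matrix.mul_sub, hCross, hA, sub_self]
    have hCrossT : Xtᵀ * X = Xᵀ * X - D := by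
      have h := congrArg Matrix.transpose hCross
      rwa [Matrix.transpose_mul, Matrix.transpose_transpose, Matrix.transpose_sub, hGT, hDT]
        at h
    have hYXt : (X * (1 - S * D))ᵀ * Xt = Xᵀ * X - ((2 : ℝ) • D - D * S * D) := by
      rw [Matrix.transpose_mul, Matrix.transpose_sub, Matrix.transpose_one, Matrix.transpose_mul,
        hST, hDT, Matrix.mul_assoc, hCross, hKsub']
    have hXtY : Xtᵀ * (X * (1 - S * D)) = Xᵀ * X - ((2 : ℝ) • D - D * S * D) := by
      rw [← Matrix.mul_assoc, hCrossT, hKsub]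
    have hYY : (X * (1 - S * D))ᵀ * (X * (1 - S * D))
        = Xᵀ * X - ((2 : ℝ) • D - D * S * D) := by
      rw [Matrix.transpose_mul, Matrix.transpose_sub, Matrix.transpose_one, Matrix.transpose_mul,
        hST, hDT, Matrix.mul_assoc, hA, hKsub']
    have hRR : Rᵀ * R = (2 : ℝ) • D - D * S * D := by
      rw [hR, Matrix.transpose_sub, Matrix.sub_mul,
        Matrix.mul_sub Xtᵀ Xt (X * (1 - S * D)),
        Matrix.mul_sub (X * (1 - S * D))ᵀ Xt (X * (1 - S * D)), hGram,
        hYXt, hXtY, hYY]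
      abel
    refine ⟨U0, U0ᵀ * R, hU0U, hU0X, ?_, ?_⟩
    · rw [Matrix.transpose_mul, Matrix.transpose_transpose, Matrix.mul_assoc,
        hU0proj R hXR, hRR]
    · rw [hU0proj R hXR, hR]
      abel
  · rintro ⟨U, C, hUU, hUX, hCC, rfl⟩
    have hXU : Xᵀ * U = 0 := by
      have h := congrArg Matrix.transpose hUX
      rwa [Matrix.transpose_mul, Matrix.transpose_transpose, Matrix.transpose_zero] at h
    have hXXt : Xᵀ * (X * (1 - S * D) + U * C) = Xᵀ * X - D := by
      rw [Matrix.mul_add, hA, ← Matrix.mul_assoc, hXU, Matrix.zero_mul, add_zero]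
    have hUXt : Uᵀ * (X * (1 - S * D) + U * C) = C := by
      rw [Matrix.mul_add, ← Matrix.mul_assoc, hUX, Matrix.zero_mul, zero_add,
        ← Matrix.mul_assoc, hUU, Matrix.one_mul]
    refine ⟨?_, hXXt⟩
    rw [hTr C U, Matrix.add_mul, Matrix.mul_assoc, Matrix.mul_assoc, hXXt, hUXt, hKsub', hCC]
    abel
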